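/- Under the main setting, for every s_0 ∈ ℂ the set of tuples (k_1, …, k_{r−1}) ∈ ℕ^{r−1} with k_1 ≥ k_2 ≥ ⋯ ≥ k_{r−1} ≥ 0 and exp((s_0 + k_1)·log α_1) = α_2^{k_1−k_2}·α_3^{k_2−k_3}⋯α_r^{k_{r−1}} is finite; i.e. every point of the pole set S is reached by only finitely many tuples of parameters. -/

import Mathlib

open Polynomial

/-- For `Q ∈ ℤ[X]`, `Q(∇)a(n) = ∑_j (coeff of X^j in Q) · a(n+j)`; this predicate says that
`Q(∇)a(n) = 0` for all `n ≥ 1`, i.e. `Q` annihilates the sequence `a`. -/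
def Annihilates (Q : Polynomial ℤ) (a : ℕ → ℤ) : Prop :=
  ∀ n : ℕ, 1 ≤ n → (Q.sum fun j c => c * a (n + j)) = 0

private lemma kle_aux (k : ℕ → ℕ) (hk : ∀ i, k (i + 1) ≤ k i) : ∀ n, k n ≤ k 0 := by
  intro n
  induction n with
  | zero => exact le_refl _
  | succ m ih => exact (hk m).trans ih

private lemma tele_aux (k : ℕ → ℕ) (hk : ∀ i, k (i + 1) ≤ k i) (n : ℕ) :
    ∑ i ∈ Finset.range n, (k i - k (i + 1)) = k 0 - k n := by
  induction n with
  | zero => simp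
  | succ m ih =>
    rw [Finset.sum_range_succ, ih]
    have h1 := hk m
    have h2 := kle_aux k hk m
    omega

/-- Under the main setting, every point `s₀` of the pole set is reached by only finitely many
parameter tuples `k₁ ≥ k₂ ≥ ⋯ ≥ k_{r-1} ≥ 0` (encoded as nonincreasing `k : ℕ → ℕ` vanishing
from index `r-1` on) satisfying
`exp((s₀+k₁)·log α₁) = α₂^{k₁-k₂}·α₃^{k₂-k₃}⋯α_r^{k_{r-1}}`. -/
theorem finitely_many_tuples_per_pole
    (a : ℕ → ℤ) (r : ℕ) (hr : 1 ≤ r)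
    (P : Polynomial ℤ) (hmonic : P.Monic)
    (hmin : ∀ Q : Polynomial ℤ, Annihilates Q a ↔ P ∣ Q)
    (hirr : Irreducible (P.map (Int.castRingHom ℚ)))
    (hdeg : P.natDegree = r)
    (α : ℕ → ℂ)
    (hroot : ∀ i, i < r → (Polynomial.aeval (α i)) P = 0)
    (hinj : Set.InjOn α (Set.Iio r))
    (α₁ : ℝ) (hα₁ : α 0 = (α₁ : ℂ)) (hα₁gt : 1 < α₁)
    (hdom : ∀ i, 1 ≤ i → i < r → ‖α i‖ < α₁) :
    ∀ s₀ : ℂ,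
      Set.Finite {k : ℕ → ℕ | (∀ i, k (i + 1) ≤ k i) ∧ (∀ i, r - 1 ≤ i → k i = 0) ∧
        Complex.exp ((s₀ + (k 0 : ℂ)) * (Real.log α₁ : ℂ)) =
          ∏ i ∈ Finset.range (r - 1), α (i + 1) ^ (k i - k (i + 1))} := by
  intro s₀
  classical
  have hα₁pos : (0 : ℝ) < α₁ := lt_trans one_pos hα₁gt
  set L := Real.log α₁ with hLdef
  have hLpos : 0 < L := Real.log_pos hα₁gt
  set C := Real.exp (s₀.re * L) with hCdef
  have hCpos : 0 < C := Real.exp_pos _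
  -- choose a bound B for the subdominant roots with 1 ≤ B < α₁
  obtain ⟨B, hB1, hBlt, hBi⟩ : ∃ B : ℝ, 1 ≤ B ∧ B < α₁ ∧
      ∀ i < r - 1, ‖α (i + 1)‖ ≤ B := by
    have hTne : (insert (1:ℝ)
        ((Finset.range (r - 1)).image fun i => ‖α (i + 1)‖)).Nonempty :=
      ⟨1, Finset.mem_insert_self _ _⟩
    refine ⟨Finset.max' _ hTne, Finset.le_max' _ _ (Finset.mem_insert_self _ _), ?_, ?_⟩
    · have hmem := Finset.max'_mem _ hTne
      rcases Finset.mem_insert.mp hmem with h | h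
      · rw [h]; exact hα₁gt
      · obtain ⟨i, hi, hfi⟩ := Finset.mem_image.mp h
        rw [Finset.mem_range] at hi
        rw [← hfi]
        exact hdom (i + 1) (by omega) (by omega)
    · intro i hi
      exact Finset.le_max'
        (insert (1:ℝ) ((Finset.range (r - 1)).image fun i => ‖α (i + 1)‖)) _
        (Finset.mem_insert_of_mem (Finset.mem_image_of_mem _ (Finset.mem_range.mpr hi)))
  -- choose N so that (B/α₁)^m < C for m ≥ N
  obtain ⟨N, hN⟩ : ∃ N : ℕ, ∀ m : ℕ, N ≤ m → (B / α₁) ^ m < C := by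
    have h1 : (0 : ℝ) ≤ B / α₁ := div_nonneg (by linarith) hα₁pos.le
    have h2 : B / α₁ < 1 := (div_lt_one hα₁pos).mpr hBlt
    have htend := tendsto_pow_atTop_nhds_zero_of_lt_one h1 h2
    have hev := htend.eventually (gt_mem_nhds hCpos)
    exact Filter.eventually_atTop.mp hev
  -- key bound : any k in the set has k 0 ≤ N
  have key : ∀ k : ℕ → ℕ, (∀ i, k (i + 1) ≤ k i) → (∀ i, r - 1 ≤ i → k i = 0) →
      Complex.exp ((s₀ + (k 0 : ℂ)) * (L : ℂ)) =
        ∏ i ∈ Finset.range (r - 1), α (i + 1) ^ (k i - k (i + 1)) →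
      k 0 ≤ N := by
    intro k hmono hzero heq
    have habs := congrArg (‖·‖) heq
    rw [Complex.norm_exp, norm_prod] at habs
    have hre : ((s₀ + (k 0 : ℂ)) * (L : ℂ)).re = (s₀.re + (k 0 : ℝ)) * L := by
      simp [Complex.mul_re]
    rw [hre, add_mul, Real.exp_add] at habs
    have hexp : Real.exp ((k 0 : ℝ) * L) = α₁ ^ (k 0) := by
      rw [Real.exp_nat_mul, Real.exp_log hα₁pos]
    rw [hexp] at habs
    -- habs : C * α₁ ^ k 0 = ∏ i, Complex.abs (α (i+1) ^ (k i - k (i+1)))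
    have hle : (∏ i ∈ Finset.range (r - 1),
        ‖α (i + 1) ^ (k i - k (i + 1))‖) ≤ B ^ (k 0) := by
      calc (∏ i ∈ Finset.range (r - 1), ‖α (i + 1) ^ (k i - k (i + 1))‖)
          ≤ ∏ i ∈ Finset.range (r - 1), B ^ (k i - k (i + 1)) := by
            apply Finset.prod_le_prod
            · intro i _; exact norm_nonneg _
            · intro i hi
              rw [norm_pow]
              exact pow_le_pow_left₀ (norm_nonneg _)
                (hBi i (Finset.mem_range.mp hi)) _
        _ = B ^ (∑ i ∈ Finset.range (r - 1), (k i - k (i + 1))) :=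
            Finset.prod_pow_eq_pow_sum _ _ _
        _ = B ^ (k 0) := by
            rw [tele_aux k hmono, hzero (r - 1) le_rfl, Nat.sub_zero]
    by_contra hcon
    have hlt := hN (k 0) (by omega)
    rw [div_pow, div_lt_iff₀ (pow_pos hα₁pos _)] at hlt
    have hfin : C * α₁ ^ (k 0) ≤ B ^ (k 0) := habs ▸ hle
    nlinarith [pow_pos hα₁pos (k 0)]
  -- conclude finiteness
  apply Set.Finite.of_finite_image (f := fun (k : ℕ → ℕ) (i : Fin r) => k i)
  · apply Set.Finite.subset (Set.Finite.pi fun _ : Fin r => Set.finite_Iic N)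
    rintro f ⟨k, ⟨hmono, hzero, heq⟩, rfl⟩
    intro i _
    exact le_trans (kle_aux k hmono i) (key k hmono hzero heq)
  · rintro k ⟨hk1, hk2, -⟩ k' ⟨hk1', hk2', -⟩ h
    funext i
    by_cases hi : i < r
    · exact congrFun h ⟨i, hi⟩
    · rw [hk2 i (by omega), hk2' i (by omega)]
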